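/- For every positive integer n, every d ∈ {0,…,2^n−1}, and all i,j ∈ {0,…,2^n−1} with i ≠ j, it is not the case that both ind(i,j) < d·2^{n−1} and ind(j,i) < d·2^{n−1}; that is, at most one of ind(i,j), ind(j,i) lies in {0,…,d·2^{n−1}−1}. -/
import Mathlib


/-- The index function `ind(i,j) = 2^n * ((j - i) mod 2^n) + i` for `i, j ∈ {0,…,2^n−1}`,
where `(j - i) mod 2^n` is the representative in `{0,…,2^n−1}` of the integer `j - i`
modulo `2^n`. -/
def ind (n : ℕ) (i j : Fin (2 ^ n)) : ℕ :=
  2 ^ n * (((j : ℤ) - (i : ℤ)) % (2 ^ n : ℤ)).toNat + (i : ℕ)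

/-- For every positive integer `n`, every `d ∈ {0,…,2^n−1}`, and all `i ≠ j` in
`{0,…,2^n−1}`, it is not the case that both `ind(i,j) < d·2^{n−1}` and
`ind(j,i) < d·2^{n−1}`. -/
theorem not_both_ind_lt (n : ℕ) (hn : 0 < n) (d : ℕ) (hd : d < 2 ^ n)
    (i j : Fin (2 ^ n)) (hij : i ≠ j) :
    ¬(ind n i j < d * 2 ^ (n - 1) ∧ ind n j i < d * 2 ^ (n - 1)) := by
  rintro ⟨h1, h2⟩
  set N : ℤ := (2 ^ n : ℤ) with hN
  have hNpos : 0 < N := by positivity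
  set a : ℤ := ((j : ℤ) - (i : ℤ)) % N with ha
  set b : ℤ := ((i : ℤ) - (j : ℤ)) % N with hb
  have ha0 : 0 ≤ a := Int.emod_nonneg _ hNpos.ne'
  have hb0 : 0 ≤ b := Int.emod_nonneg _ hNpos.ne'
  have haN : a < N := Int.emod_lt_of_pos _ hNpos
  have hbN : b < N := Int.emod_lt_of_pos _ hNpos
  have hi : (i : ℤ) < N := by rw [hN]; exact_mod_cast i.isLt
  have hj : (j : ℤ) < N := by rw [hN]; exact_mod_cast j.isLt
  have hi0 : (0 : ℤ) ≤ (i : ℤ) := Int.ofNat_nonneg _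
  have hj0 : (0 : ℤ) ≤ (j : ℤ) := Int.ofNat_nonneg _
  have hane : a ≠ 0 := by
    intro h
    have hdvd : N ∣ ((j : ℤ) - (i : ℤ)) := Int.dvd_of_emod_eq_zero h
    have := Int.eq_zero_of_abs_lt_dvd hdvd (by rw [abs_lt]; omega)
    exact hij ((Fin.ext (by omega : (j : ℕ) = (i : ℕ))).symm)
  have hbne : b ≠ 0 := by
    intro h
    have hdvd : N ∣ ((i : ℤ) - (j : ℤ)) := Int.dvd_of_emod_eq_zero h
    have := Int.eq_zero_of_abs_lt_dvd hdvd (by rw [abs_lt]; omega)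
    exact hij (Fin.ext (by omega : (i : ℕ) = (j : ℕ)))
  have hsum : a + b = N := by
    have hdvd : N ∣ (a + b) := by
      have hz : (a + b) % N = 0 := by
        rw [ha, hb, Int.emod_add_emod, Int.add_emod_emod]
        simp
      exact Int.dvd_of_emod_eq_zero hz
    obtain ⟨k, hk⟩ := hdvd
    have hk1 : k = 1 := by
      rcases lt_trichotomy k 1 with h | h | h
      · exfalso
        have hk0 : k ≤ 0 := by omega
        have : N * k ≤ 0 := mul_nonpos_of_nonneg_of_nonpos hNpos.le hk0
        omega
      · exact h
      · exfalso
        have h2k : (2 : ℤ) ≤ k := by omega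
        have : N * 2 ≤ N * k := mul_le_mul_of_nonneg_left h2k hNpos.le
        omega
    rw [hk1, mul_one] at hk
    exact hk
  have hsumN : a.toNat + b.toNat = 2 ^ n := by
    have hcast : (a.toNat : ℤ) + (b.toNat : ℤ) = N := by
      rw [Int.toNat_of_nonneg ha0, Int.toNat_of_nonneg hb0]; exact hsum
    rw [hN] at hcast
    exact_mod_cast hcast
  have e1 : ind n i j = 2 ^ n * a.toNat + (i : ℕ) := by
    unfold ind; rw [← hN, ← ha]
  have e2 : ind n j i = 2 ^ n * b.toNat + (j : ℕ) := by
    unfold ind; rw [← hN, ← hb]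
  have hA : 2 ^ n * a.toNat < d * 2 ^ (n - 1) := by omega
  have hB : 2 ^ n * b.toNat < d * 2 ^ (n - 1) := by omega
  have hpow : 2 * 2 ^ (n - 1) = 2 ^ n := by
    rw [← pow_succ']; congr 1; omega
  have hlt : 2 ^ n * 2 ^ n < d * 2 ^ n := by
    calc 2 ^ n * 2 ^ n = 2 ^ n * a.toNat + 2 ^ n * b.toNat := by
          rw [← Nat.mul_add, hsumN]
      _ < d * 2 ^ (n - 1) + d * 2 ^ (n - 1) := by omega
      _ = d * 2 ^ n := by rw [← hpow]; ring
  have : 2 ^ n < d := Nat.lt_of_mul_lt_mul_right hlt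
  omega
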